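/- Let ω⁺(x) = c_S |x|⁻⁴ (1 + A (r/|x|)^ξ) for |x| ≥ r, with c_S = 3⁴ 2⁻³ π², ξ = (−7 + √73)/2, r > 0, and A ≥ 0. Then Δω⁺(x) ≤ 4π c_TF^{−3/2} ω⁺(x)^{3/2} for all |x| > r, where c_TF = 2⁻¹ (3π²)^{2/3}. -/

import Mathlib

open Real Finset

noncomputable abbrev E3 := EuclideanSpace ℝ (Fin 3)

noncomputable def e3 (i : Fin 3) : E3 := EuclideanSpace.basisFun (Fin 3) ℝ i

/-- The Laplacian of `f : ℝ³ → ℝ`. -/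
noncomputable def laplacianE3 (f : E3 → ℝ) (x : E3) : ℝ :=
  ∑ i, iteratedFDeriv ℝ 2 f x ![e3 i, e3 i]

/-- The Sommerfeld constant `c_S = 3⁴ 2⁻³ π²`. -/
noncomputable def cS : ℝ := 3 ^ 4 * 2⁻¹ ^ 3 * π ^ 2

/-- The Thomas–Fermi constant `c_TF = 2⁻¹ (3π²)^{2/3}`. -/
noncomputable def cTF : ℝ := 2⁻¹ * (3 * π ^ 2) ^ ((2 : ℝ) / 3)

/-- The exponent `ξ = (−7 + √73)/2`. -/
noncomputable def ξ : ℝ := (-7 + Real.sqrt 73) / 2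

/-- Supersolution property of the perturbed Sommerfeld function:
`Δω⁺ ≤ 4π c_TF^{−3/2} (ω⁺)^{3/2}` for `|x| > r`, where
`ω⁺(x) = c_S |x|⁻⁴ (1 + A (r/|x|)^ξ)`. -/
lemma hξq : ξ ^ 2 + 7 * ξ = 6 := by
  have h73 : Real.sqrt 73 ^ 2 = 73 := Real.sq_sqrt (by norm_num)
  unfold ξ; nlinarith [h73]

lemma sqr {u : ℝ} (hu : 0 < u) (q : ℝ) : ((u ^ 2 : ℝ)) ^ q = u ^ (2 * q) := by
  rw [← Real.rpow_natCast u 2, ← Real.rpow_mul hu.le]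
  norm_num

lemma cS_pos : 0 < cS := by unfold cS; positivity
lemma cTF_pos : 0 < cTF := by unfold cTF; positivity

lemma key : 4 * π * cTF ^ (-(3 : ℝ) / 2) * cS ^ ((3 : ℝ) / 2) = 12 * cS := by
  have hπ := Real.pi_pos
  have h1 : (cTF ^ (-(3 : ℝ) / 2)) ^ 2 = (cTF ^ 3)⁻¹ := by
    rw [← Real.rpow_natCast (cTF ^ (-(3 : ℝ) / 2)) 2, ← Real.rpow_mul cTF_pos.le]
    rw [show (-(3 : ℝ) / 2 * (2 : ℕ) : ℝ) = -3 by push_cast; ring]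
    rw [Real.rpow_neg cTF_pos.le, ← Real.rpow_natCast cTF 3]
    norm_num
  have h2 : (cS ^ ((3 : ℝ) / 2)) ^ 2 = cS ^ 3 := by
    rw [← Real.rpow_natCast (cS ^ ((3 : ℝ) / 2)) 2, ← Real.rpow_mul cS_pos.le]
    rw [show ((3 : ℝ) / 2 * (2 : ℕ) : ℝ) = ((3 : ℕ) : ℝ) by push_cast; ring]
    rw [Real.rpow_natCast]
  have h3 : cTF ^ 3 = 2⁻¹ ^ 3 * (3 * π ^ 2) ^ 2 := by
    unfold cTF
    rw [mul_pow, ← Real.rpow_natCast ((3 * π ^ 2 : ℝ) ^ ((2 : ℝ) / 3)) 3,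
      ← Real.rpow_mul (by positivity)]
    rw [show ((2 : ℝ) / 3 * (3 : ℕ) : ℝ) = ((2 : ℕ) : ℝ) by push_cast; ring]
    rw [Real.rpow_natCast]
  have hK : (0 : ℝ) < 4 * π * cTF ^ (-(3 : ℝ) / 2) * cS ^ ((3 : ℝ) / 2) := by
    have := Real.rpow_pos_of_pos cTF_pos (-(3 : ℝ) / 2)
    have := Real.rpow_pos_of_pos cS_pos ((3 : ℝ) / 2)
    positivity
  have hsq : (4 * π * cTF ^ (-(3 : ℝ) / 2) * cS ^ ((3 : ℝ) / 2)) ^ 2 = (12 * cS) ^ 2 := by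
    have expand : (4 * π * cTF ^ (-(3 : ℝ) / 2) * cS ^ ((3 : ℝ) / 2)) ^ 2
        = 16 * π ^ 2 * (cTF ^ (-(3 : ℝ) / 2)) ^ 2 * (cS ^ ((3 : ℝ) / 2)) ^ 2 := by ring
    rw [expand, h1, h2, h3]
    unfold cS
    field_simp
    ring
  nlinarith [hK, cS_pos, hsq]

noncomputable def J : E3 →L[ℝ] (E3 →L[ℝ] ℝ) :=
  LinearMap.toContinuousLinearMap
    { toFun := fun y => innerSL ℝ y
      map_add' := by intro u v; ext w; simp [inner_add_left]
      map_smul' := by intro c u; ext w; simp [real_inner_smul_left] }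

lemma J_apply (x v : E3) : J x v = inner ℝ x v := rfl

lemma J_e3 (x : E3) (i : Fin 3) : J x (e3 i) = x i := by
  simp [J_apply, e3, EuclideanSpace.basisFun_apply, PiLp.inner_apply,
    EuclideanSpace.single_apply]

lemma term_deriv (c p : ℝ) {y : E3} (hy : 0 < ‖y‖) :
    HasFDerivAt (fun z : E3 => c * (‖z‖ ^ 2 : ℝ) ^ p)
      ((2 * (c * p * ((‖y‖ ^ 2 : ℝ)) ^ (p - 1))) • J y) y := by
  have hn : HasFDerivAt (fun z : E3 => ‖z‖ ^ 2) ((2 : ℕ) • innerSL ℝ y) y :=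
    (hasStrictFDerivAt_norm_sq y).hasFDerivAt
  have hs : (‖y‖ ^ 2 : ℝ) ≠ 0 := by positivity
  have hg : HasDerivAt (fun s : ℝ => c * s ^ p)
      (c * (p * (‖y‖ ^ 2 : ℝ) ^ (p - 1))) (‖y‖ ^ 2) :=
    (Real.hasDerivAt_rpow_const (Or.inl hs)).const_mul c
  have h := hg.comp_hasFDerivAt y hn
  refine h.congr_fderiv ?_
  ext v
  simp [J_apply, smul_smul, two_smul]
  ring

lemma lap_aux (c₁ c₂ a b r : ℝ) (hr : 0 < r) (f : E3 → ℝ) (x : E3) (hx : r < ‖x‖)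
    (hf : ∀ y : E3, r < ‖y‖ → f y = c₁ * (‖y‖ ^ 2 : ℝ) ^ a + c₂ * (‖y‖ ^ 2 : ℝ) ^ b) :
    laplacianE3 f x = c₁ * (4 * a ^ 2 + 2 * a) * (‖x‖ ^ 2 : ℝ) ^ (a - 1)
      + c₂ * (4 * b ^ 2 + 2 * b) * (‖x‖ ^ 2 : ℝ) ^ (b - 1) := by
  have hx0 : 0 < ‖x‖ := hr.trans hx
  have hU : IsOpen {y : E3 | r < ‖y‖} := isOpen_lt continuous_const continuous_norm
  set σ : E3 → ℝ := fun y => (2 * c₁ * a) * (‖y‖ ^ 2 : ℝ) ^ (a - 1)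
      + (2 * c₂ * b) * (‖y‖ ^ 2 : ℝ) ^ (b - 1) with hσdef
  set D : E3 → (E3 →L[ℝ] ℝ) := fun y => σ y • J y with hDdef
  have hD : ∀ y : E3, r < ‖y‖ → HasFDerivAt f (D y) y := by
    intro y hy
    have hy0 : 0 < ‖y‖ := hr.trans hy
    have h1 := ((term_deriv c₁ a hy0).add (term_deriv c₂ b hy0)).congr_fderiv
      (g' := D y) (by ext v; simp [hDdef, hσdef, J_apply]; ring)
    exact h1.congr_of_eventuallyEq (Filter.eventuallyEq_of_mem (hU.mem_nhds hy) fun z hz => hf z hz)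
  set m : ℝ := 2 * ((2 * c₁ * a) * (a - 1) * (‖x‖ ^ 2 : ℝ) ^ (a - 1 - 1))
      + 2 * ((2 * c₂ * b) * (b - 1) * (‖x‖ ^ 2 : ℝ) ^ (b - 1 - 1)) with hmdef
  have hσ : HasFDerivAt σ (m • J x) x := by
    refine ((term_deriv (2 * c₁ * a) (a - 1) hx0).add
      (term_deriv (2 * c₂ * b) (b - 1) hx0)).congr_fderiv ?_
    ext v; simp [hmdef, J_apply]; ring
  have hDx : HasFDerivAt D (σ x • (J : E3 →L[ℝ] E3 →L[ℝ] ℝ) + (m • J x).smulRight (J x)) x :=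
    hσ.smul J.hasFDerivAt
  have hfd : fderiv ℝ f =ᶠ[nhds x] D :=
    Filter.eventuallyEq_of_mem (hU.mem_nhds hx) fun y hy => (hD y hy).fderiv
  have key2 : fderiv ℝ (fderiv ℝ f) x = σ x • (J : E3 →L[ℝ] E3 →L[ℝ] ℝ) + (m • J x).smulRight (J x) := by
    rw [hfd.fderiv_eq]; exact hDx.fderiv
  have he3 : ∀ i : Fin 3, e3 i i = 1 := by
    intro i; simp [e3, EuclideanSpace.basisFun_apply, EuclideanSpace.single_apply]
  have hsum : ∑ i : Fin 3, (x i) ^ 2 = ‖x‖ ^ 2 := by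
    rw [EuclideanSpace.norm_eq, Real.sq_sqrt (by positivity)]
    simp [Real.norm_eq_abs, sq_abs]
  have hlap : laplacianE3 f x = 3 * σ x + m * ‖x‖ ^ 2 := by
    unfold laplacianE3
    have : ∀ i : Fin 3, iteratedFDeriv ℝ 2 f x ![e3 i, e3 i]
        = σ x * (e3 i i) + m * (x i) * (x i) := by
      intro i
      rw [iteratedFDeriv_two_apply]
      simp only [Matrix.cons_val_zero, Matrix.cons_val_one, Matrix.head_cons, key2]
      simp [ContinuousLinearMap.smulRight_apply, J_e3]
    rw [Finset.sum_congr rfl fun i _ => this i]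
    rw [Finset.sum_add_distrib]
    simp only [he3]
    have : ∑ i : Fin 3, m * x i * x i = m * ∑ i : Fin 3, (x i)^2 := by
      rw [Finset.mul_sum]; congr 1; ext i; ring
    rw [this, hsum]
    simp [Finset.sum_const]
  rw [hlap]
  have hn0 : (‖x‖ ^ 2 : ℝ) ≠ 0 := by positivity
  have ha : (‖x‖ ^ 2 : ℝ) ^ (a - 1 - 1) * ‖x‖ ^ 2 = (‖x‖ ^ 2 : ℝ) ^ (a - 1) := by
    rw [← Real.rpow_add_one hn0]; ring_nf
  have hb : (‖x‖ ^ 2 : ℝ) ^ (b - 1 - 1) * ‖x‖ ^ 2 = (‖x‖ ^ 2 : ℝ) ^ (b - 1) := by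
    rw [← Real.rpow_add_one hn0]; ring_nf
  rw [hσdef, hmdef]
  simp only
  linear_combination (4 * c₁ * a * (a - 1)) * ha + (4 * c₂ * b * (b - 1)) * hb

/-- Supersolution property. -/
theorem stmt_16 (r A : ℝ) (hr : 0 < r) (hA : 0 ≤ A)
    (ω : E3 → ℝ)
    (hω : ∀ x : E3, r ≤ ‖x‖ →
      ω x = cS * (‖x‖ ^ 4)⁻¹ * (1 + A * (r / ‖x‖) ^ ξ)) :
    ∀ x : E3, r < ‖x‖ →
      laplacianE3 ω x ≤ 4 * π * cTF ^ (-(3 : ℝ) / 2) * ω x ^ ((3 : ℝ) / 2) := by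
  intro x hx
  have hs : 0 < ‖x‖ := hr.trans hx
  -- useful rpow facts for a positive u
  have hpow4 : ∀ u : ℝ, 0 < u → (u ^ 2 : ℝ) ^ (-2 : ℝ) = (u ^ 4)⁻¹ := by
    intro u hu
    rw [sqr hu, show (2 * (-2 : ℝ)) = -((4 : ℕ) : ℝ) by push_cast; ring,
      Real.rpow_neg hu.le, Real.rpow_natCast]
  have hpowb : ∀ u : ℝ, 0 < u →
      (u ^ 2 : ℝ) ^ (-2 - ξ / 2 : ℝ) = (u ^ 4)⁻¹ * u ^ (-ξ : ℝ) := by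
    intro u hu
    rw [sqr hu, show (2 * (-2 - ξ / 2 : ℝ)) = -((4 : ℕ) : ℝ) + -ξ by push_cast; ring,
      Real.rpow_add hu, Real.rpow_neg hu.le, Real.rpow_natCast]
  have hdiv : ∀ u : ℝ, 0 < u → (r / u) ^ ξ = r ^ ξ * u ^ (-ξ : ℝ) := by
    intro u hu
    rw [Real.div_rpow hr.le hu.le, Real.rpow_neg hu.le, div_eq_mul_inv]
  -- rewrite ω in the lap_aux form
  have hf : ∀ y : E3, r < ‖y‖ →
      ω y = cS * (‖y‖ ^ 2 : ℝ) ^ (-2 : ℝ)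
        + (cS * (A * r ^ ξ)) * (‖y‖ ^ 2 : ℝ) ^ (-2 - ξ / 2 : ℝ) := by
    intro y hy
    have hu : 0 < ‖y‖ := hr.trans hy
    rw [hω y hy.le, hpow4 _ hu, hpowb _ hu, hdiv _ hu]
    ring
  have hL := lap_aux cS (cS * (A * r ^ ξ)) (-2) (-2 - ξ / 2) r hr ω x hx hf
  have c12 : (4 * (-2 : ℝ) ^ 2 + 2 * (-2)) = 12 := by norm_num
  have c18 : (4 * (-2 - ξ / 2 : ℝ) ^ 2 + 2 * (-2 - ξ / 2)) = 18 := by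
    linear_combination hξq
  -- exponent simplifications at x
  have e1 : (‖x‖ ^ 2 : ℝ) ^ (-2 - 1 : ℝ) = (‖x‖ ^ 6)⁻¹ := by
    rw [sqr hs, show (2 * (-2 - 1 : ℝ)) = -((6 : ℕ) : ℝ) by push_cast; ring,
      Real.rpow_neg hs.le, Real.rpow_natCast]
  have e2 : (‖x‖ ^ 2 : ℝ) ^ (-2 - ξ / 2 - 1 : ℝ) = (‖x‖ ^ 6)⁻¹ * ‖x‖ ^ (-ξ : ℝ) := by
    rw [sqr hs, show (2 * (-2 - ξ / 2 - 1 : ℝ)) = -((6 : ℕ) : ℝ) + -ξ by push_cast; ring,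
      Real.rpow_add hs, Real.rpow_neg hs.le, Real.rpow_natCast]
  rw [hL, c12, c18, e1, e2]
  -- now the right-hand side
  set t : ℝ := A * (r / ‖x‖) ^ ξ with ht_def
  have ht : 0 ≤ t := by
    have : (0 : ℝ) ≤ (r / ‖x‖) ^ ξ := Real.rpow_nonneg (by positivity) ξ
    exact mul_nonneg hA this
  have hωx : ω x = cS * (‖x‖ ^ 4)⁻¹ * (1 + t) := hω x hx.le
  have hrhs : ω x ^ ((3 : ℝ) / 2)
      = cS ^ ((3 : ℝ) / 2) * (‖x‖ ^ 6)⁻¹ * (1 + t) ^ ((3 : ℝ) / 2) := by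
    rw [hωx, Real.mul_rpow (mul_nonneg cS_pos.le (by positivity)) (by linarith), Real.mul_rpow cS_pos.le (by positivity)]
    have : ((‖x‖ ^ 4 : ℝ)⁻¹) ^ ((3 : ℝ) / 2) = (‖x‖ ^ 6)⁻¹ := by
      rw [← Real.rpow_natCast ‖x‖ 4, ← Real.rpow_neg hs.le, ← Real.rpow_mul hs.le,
        show (-((4 : ℕ) : ℝ) * ((3 : ℝ) / 2)) = -((6 : ℕ) : ℝ) by push_cast; ring,
        Real.rpow_neg hs.le, Real.rpow_natCast]
    rw [this]
  rw [hrhs]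
  have hbern : 1 + (3 / 2 : ℝ) * t ≤ (1 + t) ^ ((3 : ℝ) / 2) :=
    one_add_mul_self_le_rpow_one_add (by linarith) (by norm_num)
  have hcoef : 4 * π * cTF ^ (-(3 : ℝ) / 2) * (cS ^ ((3 : ℝ) / 2) * (‖x‖ ^ 6)⁻¹ * (1 + t) ^ ((3 : ℝ) / 2))
      = 12 * cS * (‖x‖ ^ 6)⁻¹ * (1 + t) ^ ((3 : ℝ) / 2) := by
    rw [show 4 * π * cTF ^ (-(3 : ℝ) / 2) * (cS ^ ((3 : ℝ) / 2) * (‖x‖ ^ 6)⁻¹ * (1 + t) ^ ((3 : ℝ) / 2))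
      = (4 * π * cTF ^ (-(3 : ℝ) / 2) * cS ^ ((3 : ℝ) / 2)) * ((‖x‖ ^ 6)⁻¹ * (1 + t) ^ ((3 : ℝ) / 2)) by ring,
      key]
    ring
  rw [hcoef]
  have htx : t = A * r ^ ξ * ‖x‖ ^ (-ξ : ℝ) := by rw [ht_def, hdiv _ hs]; ring
  have hx6 : (0 : ℝ) < (‖x‖ ^ 6)⁻¹ := by positivity
  calc cS * 12 * (‖x‖ ^ 6)⁻¹ + cS * (A * r ^ ξ) * 18 * ((‖x‖ ^ 6)⁻¹ * ‖x‖ ^ (-ξ : ℝ))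
      = 12 * cS * (‖x‖ ^ 6)⁻¹ * (1 + (3 / 2) * t) := by rw [htx]; ring
    _ ≤ 12 * cS * (‖x‖ ^ 6)⁻¹ * (1 + t) ^ ((3 : ℝ) / 2) := by
        exact mul_le_mul_of_nonneg_left hbern
          (mul_nonneg (mul_nonneg (by norm_num) cS_pos.le) hx6.le)
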